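/- Let (V, Ω) be a finite-dimensional real symplectic vector space with V ≠ 0, and let 𝔤 = 𝔥𝔰𝔭(V, Ω) be the Jacobi algebra. A nonzero derivation D of 𝔤 of the form D(v, z, x) = (c v + h v, 2 c z, [h, x]) (with c ∈ ℝ, h ∈ 𝔰𝔭(V, Ω)) satisfies 𝔤 = 𝔤_{-1}(D) ⊕ 𝔤_0(D) ⊕ 𝔤_1(D) if and only if c ∈ {1/2, -1/2} and τ := 2h is an antisymplectic involution of V (τ² = id_V and Ω(τv, τw) = -Ω(v, w)). -/

import Mathlib

/-- The bracket of the Jacobi algebra `𝔥𝔰𝔭(V, Ω) = V × ℝ × 𝔰𝔭(V, Ω)`. -/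
def jacobiBracket {V : Type*} [AddCommGroup V] [Module ℝ V]
    (Ω : LinearMap.BilinForm ℝ V)
    (p q : V × ℝ × ↥(skewAdjointLieSubalgebra Ω)) :
    V × ℝ × ↥(skewAdjointLieSubalgebra Ω) :=
  ((p.2.2 : Module.End ℝ V) q.1 - (q.2.2 : Module.End ℝ V) p.1, Ω p.1 q.1, ⁅p.2.2, q.2.2⁆)

private lemma grading_iff_cube {M : Type*} [AddCommGroup M] [Module ℝ M] (f : Module.End ℝ M) :
    (Module.End.eigenspace f (-1) ⊔ Module.End.eigenspace f 0 ⊔ Module.End.eigenspace f 1 = ⊤)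
      ↔ ∀ m, f (f (f m)) = f m := by
  constructor
  · intro htop m
    have hm : m ∈ (⊤ : Submodule ℝ M) := trivial
    rw [← htop] at hm
    rcases Submodule.mem_sup.mp hm with ⟨y, hy, w, hw, rfl⟩
    rcases Submodule.mem_sup.mp hy with ⟨a, ha, b, hb, rfl⟩
    rw [Module.End.mem_eigenspace_iff] at ha hb hw
    simp only [map_add, ha, hb, hw, map_smul, map_zero, smul_zero, zero_smul, one_smul,
      neg_smul, map_neg, neg_neg, smul_neg, add_zero]
  · intro hc
    rw [eq_top_iff]
    rintro m -
    have ha : (2⁻¹ : ℝ) • (f (f m) - f m) ∈ Module.End.eigenspace f (-1) := by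
      rw [Module.End.mem_eigenspace_iff]
      simp only [map_smul, map_sub, hc]
      module
    have hb : m - f (f m) ∈ Module.End.eigenspace f 0 := by
      rw [Module.End.mem_eigenspace_iff]
      simp only [map_sub, hc, zero_smul, sub_self]
    have hd : (2⁻¹ : ℝ) • (f (f m) + f m) ∈ Module.End.eigenspace f 1 := by
      rw [Module.End.mem_eigenspace_iff]
      simp only [map_smul, map_add, hc, one_smul]
      module
    have hsum := Submodule.add_mem_sup (Submodule.add_mem_sup ha hb) hd
    have heq : (2⁻¹:ℝ) • (f (f m) - f m) + (m - f (f m)) + (2⁻¹:ℝ) • (f (f m) + f m) = m := by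
      module
    rwa [heq] at hsum

set_option maxHeartbeats 1000000 in
/-- A nonzero derivation `D(v,z,x) = (c v + h v, 2 c z, [h,x])` of the
Jacobi algebra `𝔤 = 𝔥𝔰𝔭(V, Ω)` (with `V ≠ 0`) satisfies
`𝔤 = 𝔤₋₁(D) ⊕ 𝔤₀(D) ⊕ 𝔤₁(D)` if and only if `c = ±1/2` and `τ = 2h` is an
antisymplectic involution of `V`. -/
theorem jacobi_derivation_three_grading_iff
    (V : Type*) [AddCommGroup V] [Module ℝ V] [FiniteDimensional ℝ V] [Nontrivial V]
    (Ω : LinearMap.BilinForm ℝ V)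
    (hΩalt : ∀ v : V, Ω v v = 0)
    (hΩnondeg : ∀ v : V, (∀ w : V, Ω v w = 0) → v = 0)
    (c : ℝ) (h : ↥(skewAdjointLieSubalgebra Ω))
    (D : Module.End ℝ (V × ℝ × ↥(skewAdjointLieSubalgebra Ω)))
    (hD : ∀ p q, D (jacobiBracket Ω p q) =
      jacobiBracket Ω (D p) q + jacobiBracket Ω p (D q))
    (hDform : ∀ (v : V) (z : ℝ) (x : ↥(skewAdjointLieSubalgebra Ω)),
      D (v, z, x) = (c • v + (h : Module.End ℝ V) v, 2 * c * z, ⁅h, x⁆))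
    (hDne : D ≠ 0) :
    (Module.End.eigenspace D (-1) ⊔ Module.End.eigenspace D 0 ⊔
        Module.End.eigenspace D 1 = ⊤) ↔
      ((c = 1/2 ∨ c = -1/2) ∧
        ((2 : ℝ) • (h : Module.End ℝ V)) ∘ₗ ((2 : ℝ) • (h : Module.End ℝ V)) =
          LinearMap.id ∧
        ∀ v w : V, Ω (((2 : ℝ) • (h : Module.End ℝ V)) v)
            (((2 : ℝ) • (h : Module.End ℝ V)) w) = - Ω v w) := by
  have hΩskew : ∀ v w : V, Ω w v = -Ω v w := by
    intro v w
    have h1 := hΩalt (v + w)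
    have h2 := hΩalt v
    have h3 := hΩalt w
    simp only [map_add, LinearMap.add_apply] at h1
    linarith
  set H : Module.End ℝ V := (h : Module.End ℝ V) with hHdef
  have hskew : ∀ v w : V, Ω (H v) w = -Ω v (H w) := by
    intro v w
    have hmem : LinearMap.IsAdjointPair (-Ω) Ω H H := h.2
    simpa using hmem v w
  rw [grading_iff_cube]
  constructor
  · intro hcube
    -- scalar component equation
    have hsc : 2*c*(2*c*(2*c)) = 2*c := by
      have e := hcube (0, 1, 0)
      simp only [hDform, smul_zero, map_zero, zero_add, add_zero, lie_zero, mul_one,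
        Prod.mk.injEq, and_true, true_and] at e
      exact e
    -- V component equation
    have eV : ∀ v : V,
        c • (c • (c • v + H v) + H (c • v + H v)) + H (c • (c • v + H v) + H (c • v + H v))
          = c • v + H v := by
      intro v
      have e := hcube (v, 0, 0)
      simp only [hDform, mul_zero, lie_zero, Prod.mk.injEq, and_true, true_and, eq_self_iff_true] at e
      exact e
    -- Lie component equation
    have eL : ∀ x : ↥(skewAdjointLieSubalgebra Ω), ⁅h, ⁅h, ⁅h, x⁆⁆⁆ = ⁅h, x⁆ := by
      intro x
      have e := hcube (0, 0, x)
      simp only [hDform, smul_zero, map_zero, zero_add, add_zero, mul_zero,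
        Prod.mk.injEq, and_true, true_and] at e
      exact e
    -- rank-one operators kill eigenvectors with bad eigenvalues
    have claimA : ∀ (t : ℝ) (v : V), 8*t^3 ≠ 2*t → H v = t • v → v = 0 := by
      intro t v hne hv
      by_contra hv0
      obtain ⟨X, hXapp⟩ : ∃ X : Module.End ℝ V, ∀ u, X u = Ω u v • v :=
        ⟨(Ω.flip v).smulRight v, fun u => rfl⟩
      have hXmem : X ∈ skewAdjointLieSubalgebra Ω := by
        show LinearMap.IsAdjointPair (-Ω) Ω X X
        intro u w
        simp only [hXapp, map_smul, LinearMap.neg_apply, LinearMap.smul_apply, smul_eq_mul,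
          LinearMap.map_smul₂]
        rw [hΩskew v w]
        ring
      set xh : ↑(skewAdjointLieSubalgebra Ω) := ⟨X, hXmem⟩ with hxhdef
      have hcoe : (xh : Module.End ℝ V) = X := rfl
      have hbr : ⁅h, xh⁆ = (2*t) • xh := by
        apply Subtype.ext
        have hval : (((2*t) • xh : ↑(skewAdjointLieSubalgebra Ω)) : Module.End ℝ V)
            = (2*t) • X := rfl
        rw [show ((⁅h, xh⁆ : ↑(skewAdjointLieSubalgebra Ω)) : Module.End ℝ V) = H * xh - xh * H from rfl, hval, hcoe]
        apply LinearMap.ext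
        intro u
        have hHu : Ω (H u) v = -(t * Ω u v) := by
          rw [hskew u v, hv, map_smul, smul_eq_mul]
        simp only [LinearMap.sub_apply, Module.End.mul_apply, LinearMap.smul_apply,
          hXapp, map_smul, hv, hHu]
        module
      have e := eL xh
      rw [hbr, lie_smul, hbr, smul_smul, lie_smul, hbr, smul_smul] at e
      have e2 : (2*t*(2*t)*(2*t) - 2*t) • xh = 0 := by
        rw [sub_smul, e, sub_self]
      rcases smul_eq_zero.mp e2 with h0 | h0
      · exact hne (by linear_combination h0)
      · have hX0 : X = 0 := by
          have := congrArg (Subtype.val) h0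
          simpa [hcoe] using this
        apply hv0
        apply hΩnondeg
        intro w
        have hw := DFunLike.congr_fun hX0 w
        rw [hXapp w] at hw
        simp only [LinearMap.zero_apply] at hw
        rcases smul_eq_zero.mp hw with h1 | h1
        · rw [hΩskew w v, h1, neg_zero]
        · exact absurd h1 hv0
    have hfac : c * ((2*c - 1) * (2*c + 1)) = 0 := by linear_combination hsc / 2
    rcases mul_eq_zero.mp hfac with hc0 | hfac2
    · -- c = 0 : contradiction with D ≠ 0
      exfalso
      subst hc0
      have hker1 : ∀ v : V, H v = v → v = 0 := fun v hv =>
        claimA 1 v (by norm_num) (by simpa using hv)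
      have hkerm : ∀ v : V, H v = -v → v = 0 := fun v hv =>
        claimA (-1) v (by norm_num) (by simpa using hv)
      have hH0 : ∀ v : V, H v = 0 := by
        intro v
        have e := eV v
        simp only [zero_smul, zero_add, smul_zero, add_zero, zero_mul, map_add, map_smul] at e
        have ha : H (H (H v) + H v) = H (H v) + H v := by
          rw [map_add, e]
          exact add_comm _ _
        have h0 := hker1 _ ha
        have h1 : H (H v) = -(H v) := eq_neg_of_add_eq_zero_left h0
        exact hkerm _ h1
      apply hDne
      apply LinearMap.ext
      intro p
      have h00 : h = 0 := Subtype.ext (by apply LinearMap.ext; intro v; simpa using hH0 v)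
      have e := hDform p.1 p.2.1 p.2.2
      rw [hH0 p.1, h00, zero_lie] at e
      simp only [zero_smul, zero_add, zero_mul, mul_zero, add_zero, LinearMap.zero_apply] at e ⊢
      exact e
    · have hcval : c = 1/2 ∨ c = -1/2 := by
        rcases mul_eq_zero.mp hfac2 with h1 | h1
        · exact Or.inl (by linarith)
        · exact Or.inr (by linarith)
      have hne3 : 8*(-3*c)^3 ≠ 2*(-3*c) := by
        rcases hcval with rfl | rfl <;> norm_num
      have hquarter : ∀ v : V, H (H v) = (4⁻¹ : ℝ) • v := by
        intro v
        have hw : H (H (H v) - (4⁻¹:ℝ) • v) = (-3*c) • (H (H v) - (4⁻¹:ℝ) • v) := by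
          have e := eV v
          simp only [map_add, map_smul, smul_add, smul_smul] at e
          rw [map_sub, map_smul]
          rcases hcval with rfl | rfl <;> linear_combination (norm := module) e
        have h0 := claimA (-3*c) _ hne3 hw
        rw [sub_eq_zero] at h0
        exact h0
      refine ⟨hcval, ?_, ?_⟩
      · apply LinearMap.ext
        intro v
        simp only [LinearMap.comp_apply, LinearMap.smul_apply, map_smul, hquarter,
          LinearMap.id_apply, smul_smul]
        norm_num
      · intro v w
        have h1 : Ω (H v) (H w) = -(4⁻¹ * Ω v w) := by
          rw [hskew v (H w), hquarter w, map_smul, smul_eq_mul]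
        simp only [LinearMap.smul_apply, map_smul, smul_eq_mul, LinearMap.map_smul₂]
        rw [h1]
        ring
  · rintro ⟨hcval, hτ, -⟩
    have hquarter : ∀ v : V, H (H v) = (4⁻¹ : ℝ) • v := by
      intro v
      have e := DFunLike.congr_fun hτ v
      simp only [LinearMap.comp_apply, LinearMap.smul_apply, map_smul, LinearMap.id_apply,
        smul_smul] at e
      calc H (H v) = (4⁻¹ : ℝ) • (((2:ℝ)*2) • H (H v)) := by rw [smul_smul]; norm_num
        _ = (4⁻¹ : ℝ) • v := by rw [e]
    intro p
    obtain ⟨v, z, x⟩ := p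
    simp only [hDform, Prod.mk.injEq]
    refine ⟨?_, ?_, ?_⟩
    · rcases hcval with rfl | rfl <;>
        · simp only [map_add, map_smul, hquarter, smul_smul, smul_add]
          module
    · rcases hcval with rfl | rfl <;> ring
    · apply Subtype.ext
      have hlie : ∀ a b : ↥(skewAdjointLieSubalgebra Ω), ((⁅a, b⁆ : ↥(skewAdjointLieSubalgebra Ω)) : Module.End ℝ V) = (a : Module.End ℝ V) * b - b * a := fun _ _ => rfl
      simp only [hlie, ← hHdef]
      apply LinearMap.ext
      intro u
      simp only [LinearMap.sub_apply, Module.End.mul_apply, map_sub, map_smul, hquarter]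
      module
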